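/- Let q be a probability distribution on a finite product set X × Y with marginals q_X and q_Y, let A ⊆ X and B ⊆ Y be events, and set ACC := A × B. Let ε_deF > 0 and ξ ≥ 2 ε_deF, and suppose that ‖ q − q_X ⊗ q_Y ‖ ≤ ε_deF and q(ACC) ≥ ξ. Then ‖ q(·,· | ACC) − q_X(· | A) ⊗ q_Y(· | B) ‖ ≤ 3 ε_deF / ξ², where q(·,· | ACC), q_X(· | A), q_Y(· | B) denote the conditional distributions given the respective events. -/

import Mathlib

open Classical

noncomputable section

/-- if a joint distribution `q` on `X × Y` is `ε_deF`-close in ℓ1 distance to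
the product of its marginals, and the product event `ACC = A × B` has probability at
least `ξ ≥ 2 ε_deF`, then the conditional distribution `q(·,·|ACC)` is `3 ε_deF / ξ²`-close
to the product of the conditional marginals `q_X(·|A) ⊗ q_Y(·|B)`. -/
theorem stmt_11 {X Y : Type} [Fintype X] [Fintype Y]
    (q : X × Y → ℝ)
    (hq0 : ∀ p, 0 ≤ q p) (hq1 : ∑ p, q p = 1)
    (A : Finset X) (B : Finset Y)
    (εdeF ξ : ℝ) (hε : 0 < εdeF) (hξ : 2 * εdeF ≤ ξ)
    (hprod : ∑ p : X × Y, |q p - (∑ y, q (p.1, y)) * (∑ x, q (x, p.2))| ≤ εdeF)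
    (hACC : ξ ≤ ∑ x ∈ A, ∑ y ∈ B, q (x, y)) :
    ∑ p : X × Y,
        |(if p.1 ∈ A ∧ p.2 ∈ B then q p else 0) / (∑ x ∈ A, ∑ y ∈ B, q (x, y))
          - ((if p.1 ∈ A then ∑ y, q (p.1, y) else 0) / (∑ x ∈ A, ∑ y, q (x, y)))
            * ((if p.2 ∈ B then ∑ x, q (x, p.2) else 0) / (∑ y ∈ B, ∑ x, q (x, y)))|
      ≤ 3 * εdeF / ξ ^ 2 := by
  classical
  set qX : X → ℝ := fun x => ∑ y, q (x, y) with hqXdef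
  set qY : Y → ℝ := fun y => ∑ x, q (x, y) with hqYdef
  set P : ℝ := ∑ x ∈ A, ∑ y ∈ B, q (x, y) with hPdef
  have hqX0 : ∀ x, 0 ≤ qX x := fun x => Finset.sum_nonneg fun y _ => hq0 _
  have hqY0 : ∀ y, 0 ≤ qY y := fun y => Finset.sum_nonneg fun x _ => hq0 _
  set a : ℝ := ∑ x ∈ A, qX x with hadef
  set b : ℝ := ∑ y ∈ B, qY y with hbdef
  have ha0 : 0 ≤ a := Finset.sum_nonneg fun x _ => hqX0 x
  have hb0 : 0 ≤ b := Finset.sum_nonneg fun y _ => hqY0 y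
  have hPprod : P = ∑ p ∈ A ×ˢ B, q p := by
    rw [Finset.sum_product]
  have hP1 : P ≤ 1 := by
    rw [hPprod, ← hq1]
    exact Finset.sum_le_sum_of_subset_of_nonneg (Finset.subset_univ _)
      (fun p _ _ => hq0 p)
  have hξpos : 0 < ξ := lt_of_lt_of_le (by linarith) hξ
  have hPξ : ξ ≤ P := hACC
  have hP0 : 0 < P := lt_of_lt_of_le hξpos hPξ
  have hξ1 : ξ ≤ 1 := le_trans hPξ hP1
  -- |P - a*b| ≤ εdeF
  have hab_sum : ∑ p ∈ A ×ˢ B, qX p.1 * qY p.2 = a * b := by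
    rw [Finset.sum_product, hadef, hbdef, Finset.sum_mul_sum]
  have hPab : |P - a * b| ≤ εdeF := by
    have h1 : P - a * b = ∑ p ∈ A ×ˢ B, (q p - qX p.1 * qY p.2) := by
      rw [Finset.sum_sub_distrib, hPprod, hab_sum]
    calc |P - a * b| ≤ ∑ p ∈ A ×ˢ B, |q p - qX p.1 * qY p.2| := by
          rw [h1]; exact Finset.abs_sum_le_sum_abs _ _
      _ ≤ ∑ p : X × Y, |q p - qX p.1 * qY p.2| :=
          Finset.sum_le_sum_of_subset_of_nonneg (Finset.subset_univ _)
            (fun p _ _ => abs_nonneg _)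
      _ ≤ εdeF := hprod
  have habs := abs_le.mp hPab
  have hab_lb : εdeF ≤ a * b := by nlinarith
  have hab0 : 0 < a * b := lt_of_lt_of_le hε hab_lb
  have ha : 0 < a := by
    by_contra h; push_neg at h; nlinarith
  have hb : 0 < b := by
    by_contra h; push_neg at h; nlinarith
  set c : ℝ := |a * b - P| / (P * (a * b)) with hcdef
  have hc0 : 0 ≤ c := by positivity
  -- pointwise bound
  have hpt : ∀ p : X × Y,
      |(if p.1 ∈ A ∧ p.2 ∈ B then q p else 0) / P
        - ((if p.1 ∈ A then qX p.1 else 0) / a) * ((if p.2 ∈ B then qY p.2 else 0) / b)|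
      ≤ (if p.1 ∈ A ∧ p.2 ∈ B then |q p - qX p.1 * qY p.2| / P + qX p.1 * qY p.2 * c
          else 0) := by
    intro p
    by_cases hp : p.1 ∈ A ∧ p.2 ∈ B
    · simp only [hp, hp.1, hp.2, if_true]
      rw [div_mul_div_comm]
      have key := abs_sub_le (q p / P) (qX p.1 * qY p.2 / P) (qX p.1 * qY p.2 / (a * b))
      have e1 : |q p / P - qX p.1 * qY p.2 / P| = |q p - qX p.1 * qY p.2| / P := by
        rw [div_sub_div_same, abs_div, abs_of_pos hP0]
      have e2 : qX p.1 * qY p.2 / P - qX p.1 * qY p.2 / (a * b)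
          = qX p.1 * qY p.2 * ((a * b - P) / (P * (a * b))) := by
        field_simp
      have e3 : |qX p.1 * qY p.2 / P - qX p.1 * qY p.2 / (a * b)| = qX p.1 * qY p.2 * c := by
        rw [e2, abs_mul, abs_of_nonneg (mul_nonneg (hqX0 _) (hqY0 _)), hcdef, abs_div,
          abs_of_pos (mul_pos hP0 hab0)]
      rw [e1, e3] at key
      exact key
    · simp only [hp, if_false]
      rcases not_and_or.mp hp with h | h
      · simp [h, hP0.ne']
      · simp [h, hP0.ne']
  have hfilt : Finset.univ.filter (fun p : X × Y => p.1 ∈ A ∧ p.2 ∈ B) = A ×ˢ B := by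
    ext p; simp [Finset.mem_product]
  calc ∑ p : X × Y,
        |(if p.1 ∈ A ∧ p.2 ∈ B then q p else 0) / P
          - ((if p.1 ∈ A then qX p.1 else 0) / a) * ((if p.2 ∈ B then qY p.2 else 0) / b)|
      ≤ ∑ p : X × Y, (if p.1 ∈ A ∧ p.2 ∈ B then
            |q p - qX p.1 * qY p.2| / P + qX p.1 * qY p.2 * c else 0) :=
        Finset.sum_le_sum fun p _ => hpt p
    _ = ∑ p ∈ A ×ˢ B, (|q p - qX p.1 * qY p.2| / P + qX p.1 * qY p.2 * c) := by
        rw [← Finset.sum_filter, hfilt]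
    _ = (∑ p ∈ A ×ˢ B, |q p - qX p.1 * qY p.2|) / P
          + (∑ p ∈ A ×ˢ B, qX p.1 * qY p.2) * c := by
        rw [Finset.sum_add_distrib, Finset.sum_div, ← Finset.sum_mul]
    _ ≤ εdeF / P + (a * b) * c := by
        have h1 : (∑ p ∈ A ×ˢ B, |q p - qX p.1 * qY p.2|) ≤ εdeF :=
          le_trans (Finset.sum_le_sum_of_subset_of_nonneg (Finset.subset_univ _)
            (fun p _ _ => abs_nonneg _)) hprod
        rw [hab_sum]
        gcongr
    _ ≤ εdeF / P + εdeF / P := by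
        have : (a * b) * c ≤ εdeF / P := by
          rw [hcdef]
          rw [mul_div_assoc'] at *
          rw [div_le_div_iff₀ (mul_pos hP0 hab0) hP0]
          have h2 : |a * b - P| ≤ εdeF := by
            rw [abs_sub_comm]; exact hPab
          calc a * b * |a * b - P| * P ≤ a * b * εdeF * P := by
                have := mul_le_mul_of_nonneg_left h2 hab0.le
                nlinarith
            _ = εdeF * (P * (a * b)) := by ring
        linarith
    _ ≤ 3 * εdeF / ξ ^ 2 := by
        rw [← add_div, div_le_div_iff₀ hP0 (by positivity)]
        nlinarith [mul_nonneg (mul_nonneg hε.le hξpos.le) (by linarith : (0:ℝ) ≤ 1 - ξ),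
          mul_nonneg hε.le (by linarith : (0:ℝ) ≤ P - ξ), mul_pos hε hP0]

end
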